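/- Let L > 0 be real, let W be a non-empty set of positive integers all lying in the interval [(263/100)L, (292/100)L], let M = lcm(W), and suppose M ≥ 2000L. Take ε_m = 0 and δ_m = 1/10 for all m ∈ W. Let a/q ∈ [0,1) be a fraction in lowest terms with 1 ≤ q ≤ 9 and 0 ≤ a ≤ q−1. For 0 ≤ k ≤ 9−q set ψ_k = (292/100)(k/q + 1/10) and Ψ_k = (263/100)(k+1)/q. Then ψ_k < Ψ_k for each such k, and ⋃_{k=0}^{9−q} ( (a/q)M + ψ_k·L , (a/q)M + Ψ_k·L ) ⊆ Bad(W) ∩ [0, M). -/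

import Mathlib

/-- The quotient `Q(x,m) = ⌊x/m⌋`. -/
noncomputable def quo (x : ℝ) (m : ℕ) : ℤ := ⌊x / m⌋

/-- The remainder `R(x,m) = x − Q(x,m)·m ∈ [0,m)`. -/
noncomputable def rem (x : ℝ) (m : ℕ) : ℝ := x - quo x m * m

/-- The bad set `Bad(m,ε,δ) = {x ∈ ℝ : R(x,m) ∉ [ε·m, δ·m)}`. -/
def Bad (m : ℕ) (ε δ : ℝ) : Set ℝ := {x | rem x m ∉ Set.Ico (ε * m) (δ * m)}

/-- `Bad(W) = ⋂_{m ∈ W} Bad(m, ε_m, δ_m)`. -/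
def BadW (W : Finset ℕ) (ε δ : ℕ → ℝ) : Set ℝ := ⋂ m ∈ W, Bad m (ε m) (δ m)

set_option maxHeartbeats 1000000 in
/-- Ripples: for `a/q` in lowest terms with `q ≤ 9`, the union of the intervals
`((a/q)M + ψ_k·L, (a/q)M + Ψ_k·L)` for `0 ≤ k ≤ 9 − q` is contained in
`Bad(W) ∩ [0, M)`, where `ψ_k = (292/100)(k/q + 1/10)` and
`Ψ_k = (263/100)(k+1)/q`. -/
theorem ripples (L : ℝ) (hL : 0 < L) (W : Finset ℕ) (hW : W.Nonempty)
    (hWint : ∀ m ∈ W, (263 / 100 : ℝ) * L ≤ (m : ℝ) ∧ (m : ℝ) ≤ (292 / 100 : ℝ) * L)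
    (hM : 2000 * L ≤ ((W.lcm id : ℕ) : ℝ))
    (a q : ℕ) (hq1 : 1 ≤ q) (hq9 : q ≤ 9) (ha : a ≤ q - 1) (hcop : Nat.Coprime a q) :
    (∀ k : ℕ, k ≤ 9 - q →
      (292 / 100 : ℝ) * ((k : ℝ) / q + 1 / 10) < (263 / 100 : ℝ) * (((k : ℝ) + 1) / q)) ∧
    (⋃ k ∈ Finset.range (9 - q + 1),
        Set.Ioo
          ((a : ℝ) / q * ((W.lcm id : ℕ) : ℝ) + (292 / 100 : ℝ) * ((k : ℝ) / q + 1 / 10) * L)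
          ((a : ℝ) / q * ((W.lcm id : ℕ) : ℝ) + (263 / 100 : ℝ) * (((k : ℝ) + 1) / q) * L))
      ⊆ BadW W (fun _ => 0) (fun _ => 1 / 10) ∩ Set.Ico (0 : ℝ) ((W.lcm id : ℕ) : ℝ) := by
  have hq0R : (0:ℝ) < q := by exact_mod_cast hq1
  have hq9R : (q:ℝ) ≤ 9 := by exact_mod_cast hq9
  have hMpos : (0:ℝ) < ((W.lcm id : ℕ) : ℝ) := lt_of_lt_of_le (by positivity) hM
  constructor
  · intro k hk
    have hkq : k + q ≤ 9 := by omega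
    have hkqR : (k:ℝ) + q ≤ 9 := by exact_mod_cast hkq
    rw [div_add_div _ _ (ne_of_gt hq0R) (by norm_num : (10:ℝ) ≠ 0)]
    rw [← mul_div_assoc, ← mul_div_assoc, div_lt_div_iff₀ (by positivity) hq0R]
    nlinarith [hq0R, hkqR]
  · intro x hx
    simp only [Set.mem_iUnion, Finset.mem_range, exists_prop] at hx
    obtain ⟨k, hkr, hx1, hx2⟩ := hx
    have hkq : k + q ≤ 9 := by omega
    have hkqR : (k:ℝ) + q ≤ 9 := by exact_mod_cast hkq
    have haq : a + 1 ≤ q := by omega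
    have haR : (a:ℝ) + 1 ≤ q := by exact_mod_cast haq
    set M : ℕ := W.lcm id with hMdef
    set c : ℝ := (a:ℝ)/q * M with hc
    constructor
    · -- BadW
      simp only [BadW, Set.mem_iInter]
      intro m hm
      obtain ⟨hm1, hm2⟩ := hWint m hm
      have hm0 : (0:ℝ) < m := lt_of_lt_of_le (by positivity) hm1
      have hmne : (m:ℝ) ≠ 0 := ne_of_gt hm0
      obtain ⟨s, hs⟩ : m ∣ M := Finset.dvd_lcm hm
      have hsM : (M:ℝ) = (m:ℝ) * s := by exact_mod_cast hs
      set u1 : ℕ := (a*s)/q with hu1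
      set j : ℕ := (a*s)%q with hj
      have hd1 : q * u1 + j = a * s := Nat.div_add_mod (a*s) q
      have has : (a:ℝ) * s = q * u1 + j := by exact_mod_cast hd1.symm
      set u2 : ℕ := (j+k)/q with hu2
      set v : ℕ := (j+k)%q with hv
      have hd2 : q * u2 + v = j + k := Nat.div_add_mod (j+k) q
      have hjk : (j:ℝ) + k = q * u2 + v := by exact_mod_cast hd2.symm
      have hvq : v + 1 ≤ q := Nat.mod_lt _ (by omega)
      have hvqR : (v:ℝ) + 1 ≤ q := by exact_mod_cast hvq
      set θ : ℝ := (x - c)/m with hθ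
      have hθm : θ * m = x - c := by rw [hθ, div_mul_cancel₀ _ hmne]
      have hθ1 : (k:ℝ)/q + 1/10 < θ := by
        rw [hθ, lt_div_iff₀ hm0]
        have ht1 : (0:ℝ) ≤ (k:ℝ)/q + 1/10 := by positivity
        nlinarith [hx1, hm2, ht1]
      have hθ2 : θ < ((k:ℝ)+1)/q := by
        rw [hθ, div_lt_iff₀ hm0]
        have ht2 : (0:ℝ) ≤ ((k:ℝ)+1)/q := by positivity
        nlinarith [hx2, hm1, ht2]
      have e0 : (j:ℝ)/q = (u2:ℝ) + (v:ℝ)/q - (k:ℝ)/q := by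
        field_simp
        linarith [hjk]
      obtain ⟨y, hy⟩ : ∃ y : ℝ, y = (j:ℝ)/q + θ - u2 := ⟨_, rfl⟩
      have hy1 : 1/10 ≤ y := by
        have : (0:ℝ) ≤ (v:ℝ)/q := by positivity
        rw [hy, e0]; linarith [hθ1]
      have hy2 : y < 1 := by
        have e2 : ((v:ℝ)+1)/q = (v:ℝ)/q + 1/q := by ring
        have e3 : ((k:ℝ)+1)/q = (k:ℝ)/q + 1/q := by ring
        have : ((v:ℝ)+1)/q ≤ 1 := by
          rw [div_le_one hq0R]; exact hvqR
        rw [hy, e0]; linarith [hθ2]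
      have hcval : c = ((u1:ℝ) + (j:ℝ)/q) * m := by
        rw [hc, hsM]
        field_simp
        linear_combination has
      have hxeq : x = (((u1:ℝ) + u2) + y) * m := by
        have hxc : x = c + θ * m := by linarith [hθm]
        rw [hxc, hcval, hy]; ring
      have hxm : x / m = (((u1+u2:ℕ):ℤ):ℝ) + y := by
        rw [hxeq]; push_cast; field_simp
      have hfr : Int.fract (x/m) = y := by
        rw [hxm, Int.fract_intCast_add, Int.fract_eq_self.mpr ⟨le_trans (by norm_num) hy1, hy2⟩]
      have hrem : rem x m = m * Int.fract (x/m) := by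
        simp only [rem, quo, Int.fract]
        field_simp
      intro hbad
      rw [Set.mem_Ico] at hbad
      have : rem x m = m * y := by rw [hrem, hfr]
      nlinarith [hbad.2, hm0, hy1, this]
    · -- Ico
      rw [Set.mem_Ico]
      constructor
      · have hc0 : 0 ≤ c := by positivity
        have : (0:ℝ) ≤ (292/100:ℝ) * ((k:ℝ)/q + 1/10) * L := by positivity
        linarith
      · have hq1R : (1:ℝ) ≤ q := by exact_mod_cast hq1
        have h1 : (a:ℝ)*M ≤ ((q:ℝ)-1)*M := by nlinarith [haR, hMpos]
        have h2 : 263/100 * ((k:ℝ)+1) * L < 2000 * L := by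
          nlinarith [hkqR, hq1R, hL, mul_nonneg (show (0:ℝ) ≤ 9-((k:ℝ)+1) by linarith) hL.le]
        have hkey : (a:ℝ) * M + 263/100 * ((k:ℝ)+1) * L < q * M := by
          nlinarith [h1, h2, hM]
        have hstep : c + (263/100:ℝ) * (((k:ℝ)+1)/q) * L < M := by
          rw [hc]
          have hrw : (a:ℝ)/q*((M:ℕ):ℝ) + 263/100*(((k:ℝ)+1)/q)*L
              = ((a:ℝ)*M + 263/100*((k:ℝ)+1)*L)/q := by
            field_simp
          rw [hrw, div_lt_iff₀ hq0R]
          nlinarith [hkey]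
        linarith
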